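/- (Hybrid argument.) Fix n, w, T ≥ 1, an input x : Fin n → Bool, and a block B ⊆ Fin n. Work in the space of vectors indexed by (Fin n × Bool) × Fin w. For an input z : Fin n → Bool, let O_z be the permutation matrix sending the basis vector indexed by ((i, b), c) to the basis vector indexed by ((i, b xor z(i)), c). Let x^B denote x with all bits in B flipped. Let U_1, …, U_T be arbitrary unitary matrices on this space, let v be a unit vector, and define ψ_0 = φ_0 = v, ψ_{t+1} = U_{t+1}·O_x·ψ_t, and φ_{t+1} = U_{t+1}·O_{x^B}·φ_t for 0 ≤ t < T. For t ∈ {1, …, T} and i ∈ Fin n, let m_i^t = ∑_{b : Bool} ∑_{c : Fin w} |ψ_{t−1}((i,b),c)|² (the probability that measuring the query register after t−1 queries yields index i). Suppose ε ∈ [0, 1/2] and the final states satisfy (1/2)‖ψ_T ψ_Tᴴ − φ_T φ_Tᴴ‖₁ ≥ 1 − 2ε, where ψψᴴ is the matrix with entries ψ_u · conj(ψ_v). Then ∑_{t=1}^{T} ∑_{i ∈ B} m_i^t ≥ (1 − 2ε)² / (4T). -/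

import Mathlib

open scoped ComplexOrder

/-- The square root of a positive semidefinite matrix (the definition `Matrix.PosSemidef.sqrt`
of the older Mathlib, which has since been removed). -/
noncomputable def Matrix.PosSemidef.sqrt {n 𝕜 : Type*} [Fintype n] [RCLike 𝕜] [DecidableEq n]
    {A : Matrix n n 𝕜} (hA : A.PosSemidef) : Matrix n n 𝕜 :=
  hA.1.eigenvectorUnitary.1 * Matrix.diagonal ((↑) ∘ (√·) ∘ hA.1.eigenvalues) *
    (star hA.1.eigenvectorUnitary : Matrix n n 𝕜)

/-- The trace norm of a complex square matrix `A`: the trace of `√(Aᴴ A)`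
(equivalently, the sum of the singular values of `A`). -/
noncomputable def traceNorm {m : Type*} [Fintype m] [DecidableEq m] (A : Matrix m m ℂ) : ℝ :=
  (Matrix.PosSemidef.sqrt (Matrix.posSemidef_conjTranspose_mul_self A)).trace.re

/-- `flipBlock x B` is the input obtained from `x` by flipping every bit whose index lies in `B`. -/
def flipBlock {n : ℕ} (x : Fin n → Bool) (B : Finset (Fin n)) : Fin n → Bool :=
  fun i => if i ∈ B then !(x i) else x i

/-- The query oracle for input `z`: the permutation matrix sending the basis vector indexed by
`((i, b), c)` to the basis vector indexed by `((i, b xor z i), c)`. -/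
def queryOracle {n w : ℕ} (z : Fin n → Bool) :
    Matrix ((Fin n × Bool) × Fin w) ((Fin n × Bool) × Fin w) ℂ :=
  Matrix.of fun p q => if p = ((q.1.1, xor q.1.2 (z q.1.1)), q.2) then 1 else 0

open Matrix
set_option linter.unusedSectionVars false
set_option maxHeartbeats 1000000

open scoped MatrixOrder in
lemma Matrix.PosSemidef.eq_sqrt_of_sq_eq {ι : Type*} [Fintype ι] [DecidableEq ι]
    {S : Matrix ι ι ℂ} (hS : S.PosSemidef) (B : Matrix ι ι ℂ) {hB : B.PosSemidef}
    (h : S ^ 2 = B) : S = Matrix.PosSemidef.sqrt hB := by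
  have h1 : Matrix.PosSemidef.sqrt hB = CFC.sqrt B := by
    rw [CFC.sqrt_eq_cfc, cfc_nnreal_eq_real _ B, hB.1.cfc_eq]
    simp only [IsHermitian.cfc, Unitary.conjStarAlgAut_apply, Matrix.PosSemidef.sqrt]
    unfold Real.sqrt
    rfl
  rw [h1, eq_comm]
  exact CFC.sqrt_unique (by rw [← h, sq]) hS.nonneg

noncomputable def nsq {ι : Type*} [Fintype ι] (f : ι → ℂ) : ℝ := ∑ u, ‖f u‖ ^ 2

section VecLemmas
variable {ι : Type*} [Fintype ι] [DecidableEq ι]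

lemma nsq_nonneg (f : ι → ℂ) : 0 ≤ nsq f :=
  Finset.sum_nonneg fun _ _ => by positivity

lemma sqrt_nsq_eq_norm (f : ι → ℂ) :
    Real.sqrt (nsq f) = ‖(WithLp.equiv 2 (ι → ℂ)).symm f‖ := by
  rw [EuclideanSpace.norm_eq]
  simp [nsq]

lemma sqrt_nsq_triangle (a b c : ι → ℂ) :
    Real.sqrt (nsq (a - c)) ≤ Real.sqrt (nsq (a - b)) + Real.sqrt (nsq (b - c)) := by
  simp only [sqrt_nsq_eq_norm]
  rw [show a - c = (a - b) + (b - c) by abel, WithLp.equiv_symm_apply, WithLp.toLp_add]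
  exact norm_add_le _ _

lemma dot_eq_nsq (f : ι → ℂ) : star f ⬝ᵥ f = (nsq f : ℝ) := by
  unfold nsq dotProduct
  push_cast
  exact Finset.sum_congr rfl fun u _ => by
    rw [Pi.star_apply, mul_comm, Complex.star_def, Complex.mul_conj']

lemma nsq_mulVec_unitary {M : Matrix ι ι ℂ} (hM : M ∈ Matrix.unitaryGroup ι ℂ) (f : ι → ℂ) :
    nsq (M.mulVec f) = nsq f := by
  have h : star (M.mulVec f) ⬝ᵥ (M.mulVec f) = star f ⬝ᵥ f := by
    rw [star_mulVec, dotProduct_mulVec, vecMul_vecMul]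
    have : Mᴴ * M = 1 := hM.1
    rw [this, vecMul_one]
  rw [dot_eq_nsq, dot_eq_nsq] at h
  exact_mod_cast h

end VecLemmas

namespace Hyb
variable {n w : ℕ}

def g (z : Fin n → Bool) (p : (Fin n × Bool) × Fin w) : (Fin n × Bool) × Fin w :=
  ((p.1.1, xor p.1.2 (z p.1.1)), p.2)

lemma g_invol (z : Fin n → Bool) : Function.Involutive (g (w := w) z) := by
  rintro ⟨⟨i, b⟩, c⟩
  simp [g, Bool.xor_assoc]

lemma queryOracle_mulVec (z : Fin n → Bool) (f : (Fin n × Bool) × Fin w → ℂ)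
    (p : (Fin n × Bool) × Fin w) :
    (queryOracle z).mulVec f p = f (g z p) := by
  have key : ∀ q : (Fin n × Bool) × Fin w,
      (p = g z q) ↔ q = g z p := by
    intro q
    constructor
    · rintro rfl; rw [g_invol]
    · rintro rfl; rw [g_invol]
  simp only [Matrix.mulVec, queryOracle, dotProduct, Matrix.of_apply]
  calc (∑ q, (if p = g z q then (1:ℂ) else 0) * f q)
      = ∑ q, (if q = g z p then (1:ℂ) else 0) * f q := by
        refine Finset.sum_congr rfl fun q _ => by simp only [key q]
    _ = f (g z p) := by simp

lemma nsq_mulVec_oracle (z : Fin n → Bool) (f : (Fin n × Bool) × Fin w → ℂ) :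
    nsq ((queryOracle z).mulVec f) = nsq f := by
  unfold nsq
  simp only [queryOracle_mulVec]
  exact Equiv.sum_comp ((g_invol (w := w) z).toPerm _) (fun u => ‖f u‖ ^ 2)

lemma nsq_oracle_diff_le (x : Fin n → Bool) (B : Finset (Fin n))
    (f : (Fin n × Bool) × Fin w → ℂ) :
    nsq ((queryOracle x - queryOracle (flipBlock x B)).mulVec f)
      ≤ 4 * ∑ i ∈ B, ∑ b : Bool, ∑ c : Fin w, ‖f ((i, b), c)‖ ^ 2 := by
  unfold nsq
  simp only [Matrix.sub_mulVec, Pi.sub_apply, queryOracle_mulVec]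
  rw [Fintype.sum_prod_type, Fintype.sum_prod_type]
  have habs : ∀ a a' : ℂ, ‖a - a'‖ ^ 2 ≤ 2 * (‖a‖ ^ 2 + ‖a'‖ ^ 2) := by
    intro a a'
    have h1 : ‖a - a'‖ ≤ ‖a‖ + ‖a'‖ := by
      simpa [sub_eq_add_neg] using norm_add_le a (-a')
    have h2 : 0 ≤ ‖a - a'‖ := norm_nonneg _
    have h5 : ‖a - a'‖ ^ 2 ≤ (‖a‖ + ‖a'‖) ^ 2 :=
      pow_le_pow_left₀ h2 h1 2
    nlinarith [sq_nonneg (‖a‖ - ‖a'‖)]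
  have hz : ∀ i ∈ Finset.univ, i ∉ B →
      (∑ b : Bool, ∑ c : Fin w, ‖f (g x ((i, b), c)) - f (g (flipBlock x B) ((i, b), c))‖ ^ 2) = 0 := by
    intro i _ hi
    have : flipBlock x B i = x i := by simp [flipBlock, hi]
    simp [g, this]
  rw [← Finset.sum_subset (Finset.subset_univ B) hz, Finset.mul_sum]
  refine Finset.sum_le_sum fun i hi => ?_
  have hxi : flipBlock x B i = !(x i) := by simp [flipBlock, hi]
  have key : ∀ c : Fin w,
      (∑ b : Bool, ‖f (g x ((i, b), c)) - f (g (flipBlock x B) ((i, b), c))‖ ^ 2)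
        ≤ 4 * ∑ b : Bool, ‖f ((i, b), c)‖ ^ 2 := by
    intro c
    simp only [g, hxi]
    rw [Fintype.sum_bool, Fintype.sum_bool]
    cases hx : x i
    · simp only [hx, Bool.xor_false, Bool.xor_true, Bool.not_false, Bool.not_true]
      linarith [habs (f ((i, true), c)) (f ((i, false), c)),
        habs (f ((i, false), c)) (f ((i, true), c))]
    · simp only [hx, Bool.xor_false, Bool.xor_true, Bool.not_false, Bool.not_true]
      linarith [habs (f ((i, true), c)) (f ((i, false), c)),
        habs (f ((i, false), c)) (f ((i, true), c))]
  calc (∑ b : Bool, ∑ c : Fin w, ‖f (g x ((i, b), c)) - f (g (flipBlock x B) ((i, b), c))‖ ^ 2)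
      = ∑ c : Fin w, ∑ b : Bool, ‖f (g x ((i, b), c)) - f (g (flipBlock x B) ((i, b), c))‖ ^ 2 := Finset.sum_comm
    _ ≤ ∑ c : Fin w, 4 * ∑ b : Bool, ‖f ((i, b), c)‖ ^ 2 :=
        Finset.sum_le_sum fun c _ => key c
    _ = 4 * ∑ b : Bool, ∑ c : Fin w, ‖f ((i, b), c)‖ ^ 2 := by
        rw [← Finset.mul_sum]; congr 1; exact Finset.sum_comm

end Hyb

section TN
variable {ι : Type*} [Fintype ι] [DecidableEq ι]

lemma mul_vmv (a b c d : ι → ℂ) :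
    vecMulVec a b * vecMulVec c d = (b ⬝ᵥ c) • vecMulVec a d := by
  ext i j
  simp [mul_apply, vecMulVec_apply, dotProduct, Finset.sum_mul, Finset.mul_sum]
  exact Finset.sum_congr rfl fun k _ => by ring

lemma trace_vmv (a b : ι → ℂ) : (vecMulVec a b).trace = a ⬝ᵥ b := by
  simp [trace, vecMulVec_apply, dotProduct, Matrix.diag]

lemma vmv_conjT (a b : ι → ℂ) : (vecMulVec a b)ᴴ = vecMulVec (star b) (star a) := by
  ext i j; simp [vecMulVec_apply, mul_comm]

lemma traceNorm_zero : traceNorm (0 : Matrix ι ι ℂ) = 0 := by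
  have h : (0 : Matrix ι ι ℂ) =
      Matrix.PosSemidef.sqrt (Matrix.posSemidef_conjTranspose_mul_self (0 : Matrix ι ι ℂ)) := by
    refine Matrix.PosSemidef.eq_sqrt_of_sq_eq ?_ _ (by simp)
    exact Matrix.PosSemidef.zero
  rw [traceNorm, ← h]
  simp

lemma traceNorm_vmv_sub (ψ φ : ι → ℂ) (hψ : star ψ ⬝ᵥ ψ = 1) (hφ : star φ ⬝ᵥ φ = 1) :
    traceNorm (vecMulVec ψ (star ψ) - vecMulVec φ (star φ))
      ≤ 2 * Real.sqrt (1 - ‖star ψ ⬝ᵥ φ‖ ^ 2) := by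
  set c : ℂ := star ψ ⬝ᵥ φ with hc
  set P := vecMulVec ψ (star ψ) with hP
  set Q := vecMulVec φ (star φ) with hQ
  set R := vecMulVec ψ (star φ) with hR
  set R' := vecMulVec φ (star ψ) with hR'
  have hcc : star φ ⬝ᵥ ψ = (starRingEnd ℂ) c := by
    rw [hc, dotProduct, dotProduct, map_sum]
    refine Finset.sum_congr rfl fun u _ => ?_
    simp only [Pi.star_apply, _root_.map_mul, Complex.star_def, Complex.conj_conj]
    ring
  set A := P - Q with hA
  have hAH : Aᴴ = A := by
    rw [hA, conjTranspose_sub, hP, hQ, vmv_conjT, vmv_conjT, star_star, star_star]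
  have hPP : P * P = P := by rw [hP, mul_vmv, hψ, one_smul]
  have hPQ : P * Q = c • R := by rw [hP, hQ, mul_vmv, ← hc, ← hR]
  have hQP : Q * P = (starRingEnd ℂ) c • R' := by rw [hP, hQ, mul_vmv, hcc, ← hR']
  have hQQ : Q * Q = Q := by rw [hQ, mul_vmv, hφ, one_smul]
  have hPR : P * R = R := by rw [hP, hR, mul_vmv, hψ, one_smul]
  have hPR' : P * R' = c • P := by rw [hP, hR', mul_vmv, ← hc]
  have hQR : Q * R = (starRingEnd ℂ) c • Q := by rw [hQ, hR, mul_vmv, hcc]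
  have hQR' : Q * R' = R' := by rw [hQ, hR', mul_vmv, hφ, one_smul]
  have hA2 : A * A = P + Q - c • R - (starRingEnd ℂ) c • R' := by
    rw [hA, sub_mul, mul_sub, mul_sub, hPP, hPQ, hQP, hQQ]
    abel
  have hA3 : A * (A * A) = ((1 : ℂ) - c * (starRingEnd ℂ) c) • A := by
    rw [hA2, hA]
    simp only [sub_mul, mul_sub, mul_add, mul_smul_comm, hPP, hPQ, hQP, hQQ,
      hPR, hPR', hQR, hQR', smul_sub, smul_add, smul_smul]
    module
  have habsc : ((1 : ℂ) - c * (starRingEnd ℂ) c) = ((1 - ‖c‖ ^ 2 : ℝ) : ℂ) := by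
    rw [Complex.mul_conj, Complex.normSq_eq_norm_sq]
    push_cast
    ring
  rw [habsc] at hA3
  have htrA2 : (A * A).trace = ((2 - 2 * ‖c‖ ^ 2 : ℝ) : ℂ) := by
    rw [hA2]
    rw [trace_sub, trace_sub, trace_add, trace_smul, trace_smul, hP, hQ, hR, hR',
      trace_vmv, trace_vmv, trace_vmv, trace_vmv]
    rw [dotProduct_comm ψ (star ψ), hψ, dotProduct_comm φ (star φ), hφ,
      dotProduct_comm ψ (star φ), hcc, dotProduct_comm φ (star ψ), ← hc]
    have h1 : c • (starRingEnd ℂ) c = ((‖c‖ ^ 2 : ℝ) : ℂ) := by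
      rw [smul_eq_mul, Complex.mul_conj, Complex.normSq_eq_norm_sq]
    have h2 : (starRingEnd ℂ) c • c = ((‖c‖ ^ 2 : ℝ) : ℂ) := by
      rw [smul_eq_mul, mul_comm, Complex.mul_conj, Complex.normSq_eq_norm_sq]
    rw [h1, h2]
    push_cast
    ring
  set s := Real.sqrt (1 - ‖c‖ ^ 2) with hs
  by_cases hs0 : s = 0
  · -- degenerate case : A = 0
    have hle : 1 - ‖c‖ ^ 2 ≤ 0 := by
      rw [hs, Real.sqrt_eq_zero'] at hs0; exact hs0
    -- trace (Aᴴ * A) as a sum of normSq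
    have htr2 : (Aᴴ * A).trace = ((∑ j, ∑ i, Complex.normSq (A i j) : ℝ) : ℂ) := by
      simp only [trace, Matrix.diag, mul_apply, conjTranspose_apply]
      push_cast
      refine Finset.sum_congr rfl fun j _ => Finset.sum_congr rfl fun i _ => ?_
      rw [Complex.star_def, mul_comm, Complex.mul_conj]
    have htr2' : (Aᴴ * A).trace = ((2 - 2 * ‖c‖ ^ 2 : ℝ) : ℂ) := by
      rw [show Aᴴ * A = A * A by rw [hAH], htrA2]
    have hsum0 : (∑ j, ∑ i, Complex.normSq (A i j) : ℝ) = 2 - 2 * ‖c‖ ^ 2 := by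
      have := htr2.symm.trans htr2'
      exact_mod_cast this
    have hsumnn : 0 ≤ (∑ j, ∑ i, Complex.normSq (A i j) : ℝ) :=
      Finset.sum_nonneg fun j _ => Finset.sum_nonneg fun i _ => Complex.normSq_nonneg _
    have hA0 : A = 0 := by
      have hz : (∑ j, ∑ i, Complex.normSq (A i j) : ℝ) = 0 := le_antisymm (by linarith [hsum0]) hsumnn
      ext i j
      have h1 : ∀ j' ∈ Finset.univ, (0:ℝ) ≤ ∑ i, Complex.normSq (A i j') :=
        fun j' _ => Finset.sum_nonneg fun i _ => Complex.normSq_nonneg _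
      have h2 := (Finset.sum_eq_zero_iff_of_nonneg h1).mp hz j (Finset.mem_univ j)
      have h3 := (Finset.sum_eq_zero_iff_of_nonneg
        (fun i' _ => Complex.normSq_nonneg (A i' j))).mp h2 i (Finset.mem_univ i)
      simpa using Complex.normSq_eq_zero.mp h3
    rw [hA0, traceNorm_zero]
    positivity
  · -- nondegenerate case
    have hpos : 0 < 1 - ‖c‖ ^ 2 := by
      rcases lt_or_ge 0 (1 - ‖c‖ ^ 2) with h | h
      · exact h
      · exact absurd (by rw [hs]; exact Real.sqrt_eq_zero_of_nonpos h) hs0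
    have hss : s ^ 2 = 1 - ‖c‖ ^ 2 := Real.sq_sqrt hpos.le
    have hsne : ((s : ℂ)) ≠ 0 := Complex.ofReal_ne_zero.mpr hs0
    set S := ((s : ℂ))⁻¹ • (A * A) with hS
    have hSpsd : S.PosSemidef := by
      have key : S = (((Real.sqrt s⁻¹ : ℝ) : ℂ) • A)ᴴ * (((Real.sqrt s⁻¹ : ℝ) : ℂ) • A) := by
        rw [conjTranspose_smul, hAH, smul_mul_assoc, mul_smul_comm, smul_smul]
        rw [hS]
        congr 1
        have : (Real.sqrt s⁻¹) * (Real.sqrt s⁻¹) = s⁻¹ :=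
          Real.mul_self_sqrt (by positivity)
        rw [Complex.star_def, Complex.conj_ofReal, ← Complex.ofReal_mul, this,
          Complex.ofReal_inv]
      rw [key]
      exact posSemidef_conjTranspose_mul_self _
    have hS2 : S ^ 2 = Aᴴ * A := by
      rw [pow_two, hS, smul_mul_assoc, mul_smul_comm, smul_smul]
      rw [mul_assoc A A (A * A)]
      rw [hA3, mul_smul_comm, smul_smul, hAH]
      rw [show ((1 - ‖c‖ ^ 2 : ℝ) : ℂ) = ((s : ℂ)) * ((s : ℂ)) by
        push_cast [← hss]; ring]
      rw [show (s:ℂ)⁻¹ * (s:ℂ)⁻¹ * ((s:ℂ) * (s:ℂ)) = 1 by field_simp]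
      rw [one_smul]
    have hsqrt : S = Matrix.PosSemidef.sqrt (Matrix.posSemidef_conjTranspose_mul_self A) :=
      hSpsd.eq_sqrt_of_sq_eq _ hS2
    have : traceNorm A = 2 * s := by
      rw [traceNorm, ← hsqrt, hS, trace_smul, htrA2]
      rw [smul_eq_mul]
      have : ((s:ℂ))⁻¹ * ((2 - 2 * ‖c‖ ^ 2 : ℝ) : ℂ) = ((2 * s : ℝ) : ℂ) := by
        have h2 : (2 - 2 * ‖c‖ ^ 2 : ℝ) = 2 * s ^ 2 := by rw [hss]; ring
        rw [h2]
        push_cast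
        field_simp
      rw [this]
      simp
    exact le_of_eq this

end TN

theorem hybrid_argument {n w T : ℕ} (hn : 1 ≤ n) (hw : 1 ≤ w) (hT : 1 ≤ T)
    (x : Fin n → Bool) (B : Finset (Fin n))
    (U : ℕ → Matrix ((Fin n × Bool) × Fin w) ((Fin n × Bool) × Fin w) ℂ)
    (hU : ∀ t, 1 ≤ t → t ≤ T → U t ∈ Matrix.unitaryGroup ((Fin n × Bool) × Fin w) ℂ)
    (v : (Fin n × Bool) × Fin w → ℂ)
    (hv : ∑ u, ‖v u‖ ^ 2 = 1)
    (ψ φ : ℕ → (Fin n × Bool) × Fin w → ℂ)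
    (hψ0 : ψ 0 = v) (hφ0 : φ 0 = v)
    (hψ : ∀ t, t < T → ψ (t + 1) = (U (t + 1)).mulVec ((queryOracle x).mulVec (ψ t)))
    (hφ : ∀ t, t < T →
      φ (t + 1) = (U (t + 1)).mulVec ((queryOracle (flipBlock x B)).mulVec (φ t)))
    (ε : ℝ) (hε0 : 0 ≤ ε) (hε1 : ε ≤ 1 / 2)
    (hfar : (1 / 2 : ℝ) * traceNorm
        (Matrix.vecMulVec (ψ T) (star (ψ T)) - Matrix.vecMulVec (φ T) (star (φ T)))
      ≥ 1 - 2 * ε) :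
    ∑ t ∈ Finset.Icc 1 T, ∑ i ∈ B,
        (∑ b : Bool, ∑ c : Fin w, ‖ψ (t - 1) ((i, b), c)‖ ^ 2)
      ≥ (1 - 2 * ε) ^ 2 / (4 * T) := by
  classical
  set W : ℕ → ℝ := fun t => ∑ i ∈ B,
      ∑ b : Bool, ∑ c : Fin w, ‖ψ (t - 1) ((i, b), c)‖ ^ 2 with hW
  have hWnn : ∀ t, 0 ≤ W t := fun t =>
    Finset.sum_nonneg fun i _ => Finset.sum_nonneg fun b _ =>
      Finset.sum_nonneg fun c _ => by positivity
  -- norms are preserved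
  have hψn : ∀ t, t ≤ T → nsq (ψ t) = 1 := by
    intro t
    induction t with
    | zero => intro _; rw [hψ0]; exact hv
    | succ t ih =>
      intro h
      rw [hψ t (by omega), nsq_mulVec_unitary (hU (t + 1) (by omega) h),
        Hyb.nsq_mulVec_oracle]
      exact ih (by omega)
  have hφn : ∀ t, t ≤ T → nsq (φ t) = 1 := by
    intro t
    induction t with
    | zero => intro _; rw [hφ0]; exact hv
    | succ t ih =>
      intro h
      rw [hφ t (by omega), nsq_mulVec_unitary (hU (t + 1) (by omega) h),
        Hyb.nsq_mulVec_oracle]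
      exact ih (by omega)
  -- hybrid bound
  have key : ∀ t, t ≤ T →
      Real.sqrt (nsq (ψ t - φ t)) ≤ ∑ s ∈ Finset.Icc 1 t, 2 * Real.sqrt (W s) := by
    intro t
    induction t with
    | zero =>
      intro _
      rw [hψ0, hφ0, sub_self]
      have : nsq (0 : (Fin n × Bool) × Fin w → ℂ) = 0 := by simp [nsq]
      simp [this]
    | succ t ih =>
      intro h
      have hlt : t < T := by omega
      rw [hψ t hlt, hφ t hlt, ← Matrix.mulVec_sub]
      have e1 : Real.sqrt (nsq ((U (t+1)).mulVec
          ((queryOracle x).mulVec (ψ t) - (queryOracle (flipBlock x B)).mulVec (φ t))))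
          = Real.sqrt (nsq ((queryOracle x).mulVec (ψ t)
              - (queryOracle (flipBlock x B)).mulVec (φ t))) := by
        rw [nsq_mulVec_unitary (hU (t + 1) (by omega) h)]
      rw [e1]
      have tri := sqrt_nsq_triangle ((queryOracle x).mulVec (ψ t))
        ((queryOracle (flipBlock x B)).mulVec (ψ t))
        ((queryOracle (flipBlock x B)).mulVec (φ t))
      have h1 : Real.sqrt (nsq ((queryOracle x).mulVec (ψ t)
          - (queryOracle (flipBlock x B)).mulVec (ψ t))) ≤ 2 * Real.sqrt (W (t + 1)) := by
        rw [← Matrix.sub_mulVec]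
        have hb := Hyb.nsq_oracle_diff_le x B (ψ t)
        have hw1 : W (t + 1) = ∑ i ∈ B, ∑ b : Bool, ∑ c : Fin w,
            ‖ψ t ((i, b), c)‖ ^ 2 := by
          rw [hW]
          simp only [Nat.add_sub_cancel]
        have step1 : Real.sqrt (nsq ((queryOracle x - queryOracle (flipBlock x B)).mulVec (ψ t)))
            ≤ Real.sqrt (4 * W (t + 1)) := by
          apply Real.sqrt_le_sqrt
          rw [hw1]
          exact hb
        have step2 : Real.sqrt (4 * W (t + 1)) = 2 * Real.sqrt (W (t + 1)) := by
          rw [show (4 : ℝ) * W (t+1) = 2 ^ 2 * W (t+1) by norm_num,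
            Real.sqrt_mul (by positivity) (W (t+1)), Real.sqrt_sq (by norm_num : (0:ℝ) ≤ 2)]
        rw [← step2]
        exact step1
      have h2 : Real.sqrt (nsq ((queryOracle (flipBlock x B)).mulVec (ψ t)
          - (queryOracle (flipBlock x B)).mulVec (φ t))) ≤
            ∑ s ∈ Finset.Icc 1 t, 2 * Real.sqrt (W s) := by
        rw [← Matrix.mulVec_sub, Hyb.nsq_mulVec_oracle]
        exact ih (by omega)
      rw [Finset.sum_Icc_succ_top (by omega : 1 ≤ t + 1)]
      linarith
  -- trace-distance lower bound gives vector distance lower bound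
  set c : ℂ := star (ψ T) ⬝ᵥ (φ T) with hc
  have hψ1 : star (ψ T) ⬝ᵥ ψ T = 1 := by
    rw [dot_eq_nsq, hψn T le_rfl]; norm_num
  have hφ1 : star (φ T) ⬝ᵥ φ T = 1 := by
    rw [dot_eq_nsq, hφn T le_rfl]; norm_num
  have htn := traceNorm_vmv_sub (ψ T) (φ T) hψ1 hφ1
  have hsqrtc : 1 - 2 * ε ≤ Real.sqrt (1 - ‖c‖ ^ 2) := by
    rw [hc]
    linarith [hfar, htn]
  have hDsq : nsq (ψ T - φ T) = 2 - 2 * c.re := by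
    have hexp : nsq (ψ T - φ T) = (∑ u, Complex.normSq (ψ T u))
        + (∑ u, Complex.normSq (φ T u))
        - 2 * ∑ u, (ψ T u * (starRingEnd ℂ) (φ T u)).re := by
      unfold nsq
      simp only [Pi.sub_apply, Complex.sq_norm, Complex.normSq_sub]
      rw [Finset.sum_sub_distrib, Finset.sum_add_distrib, ← Finset.mul_sum]
    have hn1 : (∑ u, Complex.normSq (ψ T u)) = 1 := by
      have := hψn T le_rfl
      unfold nsq at this
      simpa [Complex.sq_norm] using this
    have hn2 : (∑ u, Complex.normSq (φ T u)) = 1 := by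
      have := hφn T le_rfl
      unfold nsq at this
      simpa [Complex.sq_norm] using this
    have hre : (∑ u, (ψ T u * (starRingEnd ℂ) (φ T u)).re) = c.re := by
      rw [hc, dotProduct, Complex.re_sum]
      refine Finset.sum_congr rfl fun u _ => ?_
      rw [show star (ψ T) u * φ T u = (starRingEnd ℂ) (ψ T u * (starRingEnd ℂ) (φ T u)) by
        simp [Pi.star_apply, Complex.star_def, mul_comm], Complex.conj_re]
    rw [hexp, hn1, hn2, hre]
    ring
  have hclose : 1 - ‖c‖ ^ 2 ≤ nsq (ψ T - φ T) := by
    rw [hDsq]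
    have h1 : c.re ≤ ‖c‖ := Complex.re_le_norm c
    nlinarith [norm_nonneg c, sq_nonneg (1 - ‖c‖)]
  have hfinal1 : 1 - 2 * ε ≤ Real.sqrt (nsq (ψ T - φ T)) :=
    hsqrtc.trans (Real.sqrt_le_sqrt hclose)
  have hbound := key T le_rfl
  have hsum_nonneg : (0:ℝ) ≤ ∑ s ∈ Finset.Icc 1 T, 2 * Real.sqrt (W s) :=
    Finset.sum_nonneg fun s _ => by positivity
  have hchain : 1 - 2 * ε ≤ ∑ s ∈ Finset.Icc 1 T, 2 * Real.sqrt (W s) :=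
    hfinal1.trans hbound
  have hcs : (∑ s ∈ Finset.Icc 1 T, 2 * Real.sqrt (W s)) ^ 2
      ≤ (T : ℝ) * ∑ s ∈ Finset.Icc 1 T, 4 * W s := by
    have := sq_sum_le_card_mul_sum_sq (s := Finset.Icc 1 T)
      (f := fun s => 2 * Real.sqrt (W s))
    have hcard : ((Finset.Icc 1 T).card : ℝ) = (T : ℝ) := by
      rw [Nat.card_Icc]; norm_num
    calc (∑ s ∈ Finset.Icc 1 T, 2 * Real.sqrt (W s)) ^ 2
        ≤ ((Finset.Icc 1 T).card : ℝ) * ∑ s ∈ Finset.Icc 1 T, (2 * Real.sqrt (W s)) ^ 2 :=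
          this
      _ = (T : ℝ) * ∑ s ∈ Finset.Icc 1 T, 4 * W s := by
          rw [hcard]
          congr 1
          refine Finset.sum_congr rfl fun s _ => ?_
          rw [mul_pow, Real.sq_sqrt (hWnn s)]
          norm_num
  have hε : 0 ≤ 1 - 2 * ε := by linarith
  have hsq : (1 - 2 * ε) ^ 2 ≤ (T : ℝ) * ∑ s ∈ Finset.Icc 1 T, 4 * W s := by
    calc (1 - 2 * ε) ^ 2 ≤ (∑ s ∈ Finset.Icc 1 T, 2 * Real.sqrt (W s)) ^ 2 :=
        pow_le_pow_left₀ hε hchain 2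
      _ ≤ _ := hcs
  have hT' : (0:ℝ) < (T : ℝ) := by exact_mod_cast hT
  rw [ge_iff_le, div_le_iff₀ (by positivity)]
  have : (T : ℝ) * ∑ s ∈ Finset.Icc 1 T, 4 * W s
      = (∑ t ∈ Finset.Icc 1 T, W t) * (4 * T) := by
    rw [← Finset.mul_sum]
    ring
  calc (1 - 2 * ε) ^ 2 ≤ (T : ℝ) * ∑ s ∈ Finset.Icc 1 T, 4 * W s := hsq
    _ = (∑ t ∈ Finset.Icc 1 T, W t) * (4 * T) := this
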